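/- Let X be a compact metric space, k ∈ ℕ, α_1,…,α_k, β_1,…,β_k ∈ [0,1] with Σα_i = Σβ_i = 1, and μ_1,…,μ_k, ν_1,…,ν_k Borel probability measures on X. Then D_P(Σ_i α_i μ_i, Σ_i β_i ν_i) ≤ (1/2) Σ_i |α_i − β_i| + max_{1≤i≤k} D_P(μ_i, ν_i), where D_P is the Prokhorov metric. -/

import Mathlib

open MeasureTheory

open Metric in
private lemma convex_comb_side {X : Type*} [MetricSpace X]
    [MeasurableSpace X] [BorelSpace X] {k : ℕ}
    (α β : Fin k → ℝ) (hα0 : ∀ i, 0 ≤ α i) (hβ0 : ∀ i, 0 ≤ β i)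
    (hα : ∑ i, α i = 1)
    (μ ν : Fin k → Measure X)
    (hν : ∀ i, IsProbabilityMeasure (ν i)) (t S : ℝ) (hS0 : 0 ≤ S)
    (hS : ∑ i, max (α i - β i) 0 ≤ S)
    (ht : ∀ i, levyProkhorovEDist (μ i) (ν i) < ENNReal.ofReal t) (ht0 : 0 ≤ t)
    (B : Set X) (hB : MeasurableSet B) :
    (∑ i, ENNReal.ofReal (α i) • μ i) B ≤
      (∑ i, ENNReal.ofReal (β i) • ν i) (thickening t B) + (ENNReal.ofReal S + ENNReal.ofReal t) := by
  have key : ∀ i, ENNReal.ofReal (α i) * μ i B ≤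
      ENNReal.ofReal (β i) * ν i (thickening t B)
        + ENNReal.ofReal (max (α i - β i) 0) + ENNReal.ofReal (α i) * ENNReal.ofReal t := by
    intro i
    haveI := hν i
    have h1 : μ i B ≤ ν i (thickening t B) + ENNReal.ofReal t := by
      have := left_measure_le_of_levyProkhorovEDist_lt (ht i) hB
      rwa [ENNReal.toReal_ofReal ht0] at this
    have h2 : ENNReal.ofReal (α i) ≤ ENNReal.ofReal (β i) + ENNReal.ofReal (max (α i - β i) 0) := by
      rw [← ENNReal.ofReal_add (hβ0 i) (le_max_right _ _)]
      exact ENNReal.ofReal_le_ofReal (by linarith [le_max_left (α i - β i) (0:ℝ)])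
    calc ENNReal.ofReal (α i) * μ i B
        ≤ ENNReal.ofReal (α i) * (ν i (thickening t B) + ENNReal.ofReal t) :=
          mul_le_mul_right h1 _
      _ = ENNReal.ofReal (α i) * ν i (thickening t B) + ENNReal.ofReal (α i) * ENNReal.ofReal t := by
          ring
      _ ≤ (ENNReal.ofReal (β i) + ENNReal.ofReal (max (α i - β i) 0)) * ν i (thickening t B)
            + ENNReal.ofReal (α i) * ENNReal.ofReal t := by
          gcongr
      _ = ENNReal.ofReal (β i) * ν i (thickening t B)
            + ENNReal.ofReal (max (α i - β i) 0) * ν i (thickening t B)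
            + ENNReal.ofReal (α i) * ENNReal.ofReal t := by ring
      _ ≤ ENNReal.ofReal (β i) * ν i (thickening t B)
            + ENNReal.ofReal (max (α i - β i) 0) * 1
            + ENNReal.ofReal (α i) * ENNReal.ofReal t := by
          gcongr
          exact prob_le_one
      _ = ENNReal.ofReal (β i) * ν i (thickening t B)
            + ENNReal.ofReal (max (α i - β i) 0) + ENNReal.ofReal (α i) * ENNReal.ofReal t := by
          rw [mul_one]
  simp only [Measure.finset_sum_apply, Measure.smul_apply, smul_eq_mul]
  calc ∑ i, ENNReal.ofReal (α i) * μ i B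
      ≤ ∑ i, (ENNReal.ofReal (β i) * ν i (thickening t B)
          + ENNReal.ofReal (max (α i - β i) 0) + ENNReal.ofReal (α i) * ENNReal.ofReal t) :=
        Finset.sum_le_sum fun i _ => key i
    _ = (∑ i, ENNReal.ofReal (β i) * ν i (thickening t B))
          + (∑ i, ENNReal.ofReal (max (α i - β i) 0))
          + (∑ i, ENNReal.ofReal (α i)) * ENNReal.ofReal t := by
        rw [Finset.sum_add_distrib, Finset.sum_add_distrib, Finset.sum_mul]
    _ ≤ (∑ i, ENNReal.ofReal (β i) * ν i (thickening t B))
          + ENNReal.ofReal S + ENNReal.ofReal t := by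
        have e1 : ∑ i, ENNReal.ofReal (max (α i - β i) 0) ≤ ENNReal.ofReal S := by
          rw [← ENNReal.ofReal_sum_of_nonneg (fun i _ => le_max_right _ _)]
          exact ENNReal.ofReal_le_ofReal hS
        have e2 : (∑ i, ENNReal.ofReal (α i)) = 1 := by
          rw [← ENNReal.ofReal_sum_of_nonneg (fun i _ => hα0 i), hα, ENNReal.ofReal_one]
        rw [e2, one_mul]
        gcongr
    _ = (∑ i, ENNReal.ofReal (β i) * ν i (thickening t B))
          + (ENNReal.ofReal S + ENNReal.ofReal t) := by ring

private lemma half_abs_sum {k : ℕ} (α β : Fin k → ℝ) (hα : ∑ i, α i = 1) (hβ : ∑ i, β i = 1) :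
    ∑ i, max (α i - β i) 0 = (1 / 2) * ∑ i, |α i - β i| := by
  have hmax : ∀ x : ℝ, max x 0 = (x + |x|) / 2 := by
    intro x
    rcases le_total 0 x with h | h
    · rw [max_eq_left h, abs_of_nonneg h]; ring
    · rw [max_eq_right h, abs_of_nonpos h]; ring
  have : ∑ i, max (α i - β i) 0 = ∑ i, ((α i - β i) + |α i - β i|) / 2 := by
    exact Finset.sum_congr rfl fun i _ => hmax _
  rw [this]
  have hsum : ∑ i, (α i - β i) = 0 := by
    rw [Finset.sum_sub_distrib, hα, hβ]; ring
  rw [show (∑ i, ((α i - β i) + |α i - β i|) / 2)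
      = ((∑ i, (α i - β i)) + ∑ i, |α i - β i|) / 2 by
    rw [← Finset.sum_add_distrib, ← Finset.sum_div], hsum]
  ring

/-- For convex combinations of Borel probability measures on a compact
metric space, the Prokhorov distance satisfies
`D_P(Σ αᵢ μᵢ, Σ βᵢ νᵢ) ≤ (1/2) Σ |αᵢ − βᵢ| + max_i D_P(μᵢ, νᵢ)`. -/
theorem prokhorov_dist_convex_combination {X : Type*} [MetricSpace X] [CompactSpace X]
    [MeasurableSpace X] [BorelSpace X] (k : ℕ)
    (α β : Fin k → ℝ) (hα0 : ∀ i, α i ∈ Set.Icc (0:ℝ) 1) (hβ0 : ∀ i, β i ∈ Set.Icc (0:ℝ) 1)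
    (hα : ∑ i, α i = 1) (hβ : ∑ i, β i = 1)
    (μ ν : Fin k → Measure X)
    (hμ : ∀ i, IsProbabilityMeasure (μ i)) (hν : ∀ i, IsProbabilityMeasure (ν i)) :
    levyProkhorovDist (∑ i, ENNReal.ofReal (α i) • μ i) (∑ i, ENNReal.ofReal (β i) • ν i) ≤
      (1 / 2) * ∑ i, |α i - β i| + ⨆ i, levyProkhorovDist (μ i) (ν i) := by
  rcases Nat.eq_zero_or_pos k with hk | hk
  · subst hk; simp at hα
  haveI : Nonempty (Fin k) := ⟨⟨0, hk⟩⟩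
  set S : ℝ := (1 / 2) * ∑ i, |α i - β i| with hSdef
  set D : ℝ := ⨆ i, levyProkhorovDist (μ i) (ν i) with hDdef
  have hDnn : ∀ i, 0 ≤ levyProkhorovDist (μ i) (ν i) := fun i => ENNReal.toReal_nonneg
  have hD0 : 0 ≤ D := le_ciSup_of_le (Set.Finite.bddAbove (Set.finite_range _)) ⟨0, hk⟩ (hDnn _)
  have hDi : ∀ i, levyProkhorovDist (μ i) (ν i) ≤ D :=
    fun i => le_ciSup (f := fun i => levyProkhorovDist (μ i) (ν i)) (Set.Finite.bddAbove (Set.finite_range _)) i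
  have hS0 : 0 ≤ S := by
    have : (0:ℝ) ≤ ∑ i, |α i - β i| := Finset.sum_nonneg fun i _ => abs_nonneg _
    positivity
  rw [levyProkhorovDist]
  apply ENNReal.toReal_le_of_le_ofReal (by linarith)
  apply levyProkhorovEDist_le_of_forall
  intro ε B hε hεtop hB
  set e : ℝ := ε.toReal with hedef
  have he : S + D < e := by
    rw [hedef, ← ENNReal.ofReal_lt_iff_lt_toReal (by linarith) hεtop.ne]
    exact hε
  have hεe : ε = ENNReal.ofReal e := (ENNReal.ofReal_toReal hεtop.ne).symm
  set t : ℝ := e - S with htdef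
  have htD : D < t := by rw [htdef]; linarith
  have ht0 : 0 ≤ t := by linarith
  have hedist : ∀ i, levyProkhorovEDist (μ i) (ν i) < ENNReal.ofReal t := by
    intro i
    haveI := hμ i; haveI := hν i
    have hne := levyProkhorovEDist_ne_top (μ i) (ν i)
    calc levyProkhorovEDist (μ i) (ν i)
        = ENNReal.ofReal (levyProkhorovDist (μ i) (ν i)) := by
          rw [levyProkhorovDist, ENNReal.ofReal_toReal hne]
      _ ≤ ENNReal.ofReal D := ENNReal.ofReal_le_ofReal (hDi i)
      _ < ENNReal.ofReal t := (ENNReal.ofReal_lt_ofReal_iff_of_nonneg hD0).mpr htD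
  have hsplit : ε = ENNReal.ofReal S + ENNReal.ofReal t := by
    rw [hεe, ← ENNReal.ofReal_add hS0 ht0]
    congr 1
    rw [htdef]; ring
  have hthick : ∀ (κ : Measure X) (s : Set X), κ (Metric.thickening t s) ≤ κ (Metric.thickening e s) :=
    fun κ s => measure_mono (Metric.thickening_mono (by linarith) s)
  constructor
  · calc (∑ i, ENNReal.ofReal (α i) • μ i) B
        ≤ (∑ i, ENNReal.ofReal (β i) • ν i) (Metric.thickening t B)
            + (ENNReal.ofReal S + ENNReal.ofReal t) := by
          apply convex_comb_side α β (fun i => (hα0 i).1) (fun i => (hβ0 i).1) hα μ ν hν t S hS0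
            (by rw [half_abs_sum α β hα hβ, hSdef]) hedist ht0 B hB
      _ ≤ (∑ i, ENNReal.ofReal (β i) • ν i) (Metric.thickening e B)
            + (ENNReal.ofReal S + ENNReal.ofReal t) := add_le_add_left (hthick _ B) _
      _ = (∑ i, ENNReal.ofReal (β i) • ν i) (Metric.thickening ε.toReal B) + ε := by
          rw [← hsplit, hedef]
  · calc (∑ i, ENNReal.ofReal (β i) • ν i) B
        ≤ (∑ i, ENNReal.ofReal (α i) • μ i) (Metric.thickening t B)
            + (ENNReal.ofReal S + ENNReal.ofReal t) := by
          apply convex_comb_side β α (fun i => (hβ0 i).1) (fun i => (hα0 i).1) hβ ν μ hμ t S hS0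
            ?_ (fun i => by rw [levyProkhorovEDist_comm]; exact hedist i) ht0 B hB
          have habs : ∑ i, |β i - α i| = ∑ i, |α i - β i| :=
            Finset.sum_congr rfl fun i _ => abs_sub_comm _ _
          rw [half_abs_sum β α hβ hα, habs, hSdef]
      _ ≤ (∑ i, ENNReal.ofReal (α i) • μ i) (Metric.thickening e B)
            + (ENNReal.ofReal S + ENNReal.ofReal t) := add_le_add_left (hthick _ B) _
      _ = (∑ i, ENNReal.ofReal (α i) • μ i) (Metric.thickening ε.toReal B) + ε := by
          rw [← hsplit, hedef]
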